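/- Let g be a positive integer, q = ⌈g²/2⌉ + g, and z = ⌈g²/2⌉. Define the q×q array P by: for j,k ∈ [1:q], P(j,k) = * if j ∈ {<k−z+1>_q, <k−z+2>_q, …, <k>_q}; otherwise j = <k+h>_q for a unique h ∈ [1:g], and P(j,k) = <j−(h−1)(g+2)>_q if 1 ≤ h ≤ ⌈g/2⌉, while P(j,k) = <k−(g−h)(g+2)>_q if ⌈g/2⌉ < h ≤ g. Then P is a g-regular (q, q, z, q) placement delivery array. -/

import Mathlib

/-- A `(K,F,Z,S)` placement delivery array: an `F × K` array whose entries are either `*`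
(encoded as `none`) or integers in `[1:S]` (encoded as `some s` with `s : Fin S`). -/
def IsPDA (K F Z S : ℕ) (P : Fin F → Fin K → Option (Fin S)) : Prop :=
  (∀ k : Fin K, (Finset.univ.filter fun j : Fin F => P j k = none).card = Z) ∧
  (∀ s : Fin S, ∃ (j : Fin F) (k : Fin K), P j k = some s) ∧
  (∀ (j1 j2 : Fin F) (k1 k2 : Fin K) (s : Fin S),
      P j1 k1 = some s → P j2 k2 = some s → (j1, k1) ≠ (j2, k2) →
      P j1 k2 = none ∧ P j2 k1 = none)

/-- A PDA is `g`-regular if each integer appears exactly `g` times. -/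
def PDARegular (K F S g : ℕ) (P : Fin F → Fin K → Option (Fin S)) : Prop :=
  ∀ s : Fin S,
    (Finset.univ.filter fun jk : Fin F × Fin K => P jk.1 jk.2 = some s).card = g

/-- Row `i` is a star row for the integer `s`. -/
def PDAStarRow (K F S : ℕ) (P : Fin F → Fin K → Option (Fin S)) (i : Fin F) (s : Fin S) : Prop :=
  ∀ (j : Fin F) (k : Fin K), P j k = some s → P i k = none

/-- Condition 1 with parameter `lam`. -/
def PDACondition1 (K F Z S lam : ℕ) (P : Fin F → Fin K → Option (Fin S)) : Prop :=
  lam ∣ F ∧ lam ∣ Z ∧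
  (∀ (j : Fin F) (k : Fin K),
      P j k = none ↔
        P ⟨j.val % (F / lam), Nat.lt_of_le_of_lt (Nat.mod_le _ _) j.isLt⟩ k = none) ∧
  ∃ φ : Fin S → Fin (F / lam),
    (∀ s : Fin S, PDAStarRow K F S P (Fin.castLE (Nat.div_le_self F lam) (φ s)) s) ∧
    (∀ j : Fin (F / lam), (Finset.univ.filter fun s : Fin S => φ s = j).card * F = lam * S)

/-- Condition 2: every row contains the same number of stars. -/
def PDACondition2 (K F S : ℕ) (P : Fin F → Fin K → Option (Fin S)) : Prop :=
  ∀ j1 j2 : Fin F,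
    (Finset.univ.filter fun k : Fin K => P j1 k = none).card =
    (Finset.univ.filter fun k : Fin K => P j2 k = none).card

/-- `subMod a b q` computes `(a - b) mod q` (the 0-based residue), where the subtraction is
made safe in `ℕ` by first adding the multiple `q * b`. -/
def subMod (a b q : ℕ) : ℕ := (a + q * b - b) % q

def pdaE (g m h : ℕ) : ℕ := if h ≤ m then (h-1)*(g+2) else (g-h)*(g+2)+h

lemma natsub_mod_val (q : ℕ) [NeZero q] (a b : ℕ) (hb : b ≤ q) :
    (a + q - b) % q = ((a : ZMod q) - (b : ℕ)).val := by
  rw [← ZMod.val_natCast]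
  congr 1
  rw [Nat.cast_sub (by omega : b ≤ a + q)]
  push_cast [ZMod.natCast_self]
  ring

lemma subMod_val (q : ℕ) [NeZero q] (a b : ℕ) :
    subMod a b q = ((a : ZMod q) - (b : ℕ)).val := by
  rw [subMod, ← ZMod.val_natCast]
  congr 1
  have hb : b ≤ a + q * b := by
    have := Nat.le_mul_of_pos_left b (NeZero.pos q)
    omega
  rw [Nat.cast_sub hb]
  push_cast [ZMod.natCast_self]
  ring

lemma valcast (q : ℕ) [NeZero q] (x : ZMod q) : ((x.val : ℕ) : ZMod q) = x := by
  rw [ZMod.natCast_val, ZMod.cast_id]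

lemma zmod_val_lt_of_int (q z g : ℕ) [NeZero q] (hq : q = z + g)
    (x : ZMod q) (D : ℤ) (hx : x = (D : ZMod q))
    (hD : (0 ≤ D ∧ D < (z : ℤ)) ∨ (-(q : ℤ) < D ∧ D < -(g : ℤ))) : x.val < z := by
  rcases hD with ⟨h0, h1⟩ | ⟨h0, h1⟩
  · obtain ⟨n, rfl⟩ := Int.eq_ofNat_of_zero_le h0
    have hn : n < z := by exact_mod_cast h1
    rw [hx, Int.cast_natCast, ZMod.val_cast_of_lt (by omega)]
    exact hn
  · set n := (-D).toNat with hn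
    have hDn : D = -(n : ℤ) := by omega
    have hgn : g < n := by omega
    have hnq : n < q := by omega
    have hx2 : x = -((n : ℕ) : ZMod q) := by rw [hx, hDn]; push_cast; ring
    rw [hx2, ZMod.neg_val]
    have hv : ((n : ℕ) : ZMod q).val = n := ZMod.val_cast_of_lt hnq
    have hne : ((n : ℕ) : ZMod q) ≠ 0 := by
      intro h; rw [h, ZMod.val_zero] at hv; omega
    rw [if_neg hne, hv]
    omega

set_option maxHeartbeats 2000000 in
lemma pda_core (g m z q : ℕ) [NeZero q] (hg : 0 < g)
    (hm1 : g ≤ 2*m) (hm2 : 2*m ≤ g+1)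
    (hz1 : g^2 ≤ 2*z) (hz2 : 2*z ≤ g^2+1) (hq : q = z + g)
    (h1 h2 : ℕ) (l1 : 1 ≤ h1) (u1 : h1 ≤ g) (l2 : 1 ≤ h2) (u2 : h2 ≤ g) (hne : h1 ≠ h2) :
    (((pdaE g m h2 : ℕ) : ZMod q) - ((h2 : ℕ) : ZMod q)
      - ((pdaE g m h1 : ℕ) : ZMod q)).val < z := by
  have hA1 : (1:ℤ) ≤ h1 := by exact_mod_cast l1
  have hA2 : (h1:ℤ) ≤ g := by exact_mod_cast u1
  have hB1 : (1:ℤ) ≤ h2 := by exact_mod_cast l2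
  have hB2 : (h2:ℤ) ≤ g := by exact_mod_cast u2
  have hG : (1:ℤ) ≤ g := by exact_mod_cast hg
  have hM1 : (g:ℤ) ≤ 2*m := by exact_mod_cast hm1
  have hM2 : 2*(m:ℤ) ≤ g+1 := by exact_mod_cast hm2
  have hZ1 : (g:ℤ)^2 ≤ 2*z := by exact_mod_cast hz1
  have hZ2 : 2*(z:ℤ) ≤ g^2+1 := by exact_mod_cast hz2
  have hQ : (q:ℤ) = z + g := by exact_mod_cast hq
  have hGp : (0:ℤ) ≤ (g:ℤ)+1 := by linarith
  have hGp2 : (0:ℤ) ≤ (g:ℤ)+2 := by linarith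
  by_cases c1 : h1 ≤ m <;> by_cases c2 : h2 ≤ m
  · -- both ≤ m
    have cB : (h2:ℤ) ≤ m := by exact_mod_cast c2
    have cA : (h1:ℤ) ≤ m := by exact_mod_cast c1
    apply zmod_val_lt_of_int q z g hq _ (((h2:ℤ) - h1)*((g:ℤ)+2) - h2)
    · simp only [pdaE, if_pos c1, if_pos c2]
      push_cast [Nat.cast_sub l1, Nat.cast_sub l2]
      ring
    · rcases Nat.lt_or_ge h1 h2 with hlt | hge
      · have hab : (h1:ℤ) < h2 := by exact_mod_cast hlt
        have P0 := mul_le_mul_of_nonneg_right (show (1:ℤ) ≤ (h2:ℤ)-h1 by linarith) hGp2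
        have P1 := mul_le_mul_of_nonneg_right
          (show ((h2:ℤ)-h1) ≤ (m:ℤ)-1 by linarith) hGp
        have P2 := mul_le_mul_of_nonneg_right
          (show 2*((m:ℤ)-1) ≤ (g:ℤ)-1 by linarith) hGp
        left
        constructor
        · nlinarith [P0]
        · nlinarith [P1, P2]
      · have hab : (h2:ℤ) < h1 := by exact_mod_cast (show h2 < h1 by omega)
        have P0 := mul_le_mul_of_nonneg_right (show (1:ℤ) ≤ (h1:ℤ)-h2 by linarith) hGp2
        have P1 := mul_le_mul_of_nonneg_left (show (1:ℤ) ≤ (g:ℤ)+2 by linarith)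
          (show (0:ℤ) ≤ (h2:ℤ)-1 by linarith)
        have P2 := mul_le_mul_of_nonneg_right
          (show ((h1:ℤ)-1) ≤ (m:ℤ)-1 by linarith) hGp2
        have P3 := mul_le_mul_of_nonneg_right
          (show 2*((m:ℤ)-1) ≤ (g:ℤ)-1 by linarith) hGp2
        right
        constructor
        · nlinarith [P1, P2, P3]
        · nlinarith [P0]
  · -- h1 ≤ m < h2
    have cA : (h1:ℤ) ≤ m := by exact_mod_cast c1
    have cB : (m:ℤ) < h2 := by exact_mod_cast (Nat.lt_of_not_le c2)
    apply zmod_val_lt_of_int q z g hq _ (((g:ℤ)+1-h1-h2)*((g:ℤ)+2))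
    · simp only [pdaE, if_pos c1, if_neg c2]
      push_cast [Nat.cast_sub l1, Nat.cast_sub u2]
      ring
    · rcases le_or_gt ((h1:ℤ)+h2) ((g:ℤ)+1) with hle | hgt
      · have P1 := mul_le_mul_of_nonneg_right
          (show 2*((g:ℤ)+1-h1-h2) ≤ (g:ℤ)-2 by linarith) hGp2
        left
        exact ⟨mul_nonneg (by linarith) hGp2, by nlinarith [P1]⟩
      · have P0 := mul_le_mul_of_nonneg_right
          (show (1:ℤ) ≤ (h1:ℤ)+h2-g-1 by linarith) hGp2
        have P2 := mul_le_mul_of_nonneg_right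
          (show 2*((h1:ℤ)+h2-g-1) ≤ (g:ℤ)-1 by linarith) hGp2
        right
        constructor
        · nlinarith [P2]
        · nlinarith [P0]
  · -- h2 ≤ m < h1
    have cB : (h2:ℤ) ≤ m := by exact_mod_cast c2
    have cA : (m:ℤ) < h1 := by exact_mod_cast (Nat.lt_of_not_le c1)
    have hg2 : (2:ℤ) ≤ g := by linarith
    apply zmod_val_lt_of_int q z g hq _ (((h1:ℤ)+h2-g-1)*((g:ℤ)+2) - h1 - h2)
    · simp only [pdaE, if_neg c1, if_pos c2]
      push_cast [Nat.cast_sub l2, Nat.cast_sub u1]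
      ring
    · rcases le_or_gt ((g:ℤ)+2) ((h1:ℤ)+h2) with hge | hlt
      · have P0 := mul_nonneg (show (0:ℤ) ≤ (h1:ℤ)+h2-g-2 by linarith) hGp
        have P1 := mul_le_mul_of_nonneg_right
          (show 2*((h1:ℤ)+h2-g-2) ≤ (g:ℤ)-3 by linarith) hGp
        left
        constructor
        · nlinarith [P0]
        · nlinarith [P1]
      · rcases eq_or_lt_of_le (show (h1:ℤ)+h2 ≤ g+1 by linarith) with heq | hlt2
        · right
          constructor
          · nlinarith [mul_nonneg (show (0:ℤ) ≤ (g:ℤ)-2 by linarith)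
              (show (0:ℤ) ≤ (g:ℤ) by linarith)]
          · nlinarith
        · have P0 := mul_le_mul_of_nonneg_right
            (show (1:ℤ) ≤ (g:ℤ)+1-h1-h2 by linarith) hGp
          have P2 := mul_le_mul_of_nonneg_right
            (show 2*((g:ℤ)+1-h1-h2)+2 ≤ (g:ℤ) by linarith) hGp
          right
          constructor
          · nlinarith [P2]
          · nlinarith [P0]
  · -- both > m
    have cA : (m:ℤ) < h1 := by exact_mod_cast (Nat.lt_of_not_le c1)
    have cB : (m:ℤ) < h2 := by exact_mod_cast (Nat.lt_of_not_le c2)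
    apply zmod_val_lt_of_int q z g hq _ (((h1:ℤ) - h2)*((g:ℤ)+2) - h1)
    · simp only [pdaE, if_neg c1, if_neg c2]
      push_cast [Nat.cast_sub u1, Nat.cast_sub u2]
      ring
    · rcases Nat.lt_or_ge h2 h1 with hlt | hge
      · have hab : (h2:ℤ) < h1 := by exact_mod_cast hlt
        have P0 := mul_le_mul_of_nonneg_right (show (1:ℤ) ≤ (h1:ℤ)-h2 by linarith) hGp2
        have P1 := mul_le_mul_of_nonneg_right
          (show 2*((h1:ℤ)-h2) ≤ (g:ℤ)-2 by linarith) hGp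
        left
        constructor
        · nlinarith [P0]
        · nlinarith [P1]
      · have hab : (h1:ℤ) < h2 := by exact_mod_cast (show h1 < h2 by omega)
        have P0 := mul_le_mul_of_nonneg_right (show (1:ℤ) ≤ (h2:ℤ)-h1 by linarith) hGp2
        have P1 := mul_le_mul_of_nonneg_right
          (show 2*((h2:ℤ)-h1) ≤ (g:ℤ)-2 by linarith) hGp
        right
        constructor
        · nlinarith [P1]
        · nlinarith [P0]

set_option maxHeartbeats 1000000 in
/-- Lemma 3, first part: the array of Construction 3 is a `g`-regular
`(q,q,z,q)` PDA, where `q = ⌈g²/2⌉ + g` and `z = ⌈g²/2⌉`. Indices are 0-based: the paper's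
cell `(j,k)` with `j,k ∈ [1:q]` corresponds to `(J,K) = (j-1,k-1)`; the paper's entry
`j ∈ [k-z+1 : k]_q` becomes `(K + q - J) % q < z`; the unique `h` with `j = <k+h>_q` is
`h = (J + q - K) % q`; the 0-based value of `<x>_q` is `<x>_q - 1`, computed via `subMod`. -/
theorem pda_construction3 (g c q z : ℕ) (hg : 0 < g)
    (hc : c = (g ^ 2 + 1) / 2) (hq : q = c + g) (hz : z = c)
    (P : Fin q → Fin q → Option (Fin q))
    (hP : ∀ J K : Fin q, P J K =
      if (K.val + q - J.val) % q < z then none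
      else if (J.val + q - K.val) % q ≤ (g + 1) / 2 then
        some ⟨subMod J.val (((J.val + q - K.val) % q - 1) * (g + 2)) q,
          by simp only [subMod]; exact Nat.mod_lt _ (by omega)⟩
      else
        some ⟨subMod K.val ((g - (J.val + q - K.val) % q) * (g + 2)) q,
          by simp only [subMod]; exact Nat.mod_lt _ (by omega)⟩) :
    IsPDA q q z q P ∧ PDARegular q q q g P := by
  obtain ⟨G, hG⟩ : ∃ G, g ^ 2 = G := ⟨_, rfl⟩
  have hGg : g ≤ G := by nlinarith
  rw [hG] at hc
  have hzq : q = z + g := by omega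
  have hz1 : g ^ 2 ≤ 2 * z := by rw [hG]; omega
  have hz2 : 2 * z ≤ g ^ 2 + 1 := by rw [hG]; omega
  have hzpos : 0 < z := by omega
  have hgq : g < q := by omega
  haveI : NeZero q := ⟨by omega⟩
  set m := (g + 1) / 2 with hmdef
  have hm1 : g ≤ 2 * m := by omega
  have hm2 : 2 * m ≤ g + 1 := by omega
  have castinj : ∀ a b : ℕ, a < q → b < q → ((a : ℕ) : ZMod q) = ((b : ℕ) : ZMod q) → a = b := by
    intro a b ha hb hab
    rw [← ZMod.val_cast_of_lt ha, hab, ZMod.val_cast_of_lt hb]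
  -- rewritten form of hP
  have hP' : ∀ J K : Fin q, P J K =
      if (((K.val : ℕ) : ZMod q) - ((J.val : ℕ) : ZMod q)).val < z then none
      else if (((J.val : ℕ) : ZMod q) - ((K.val : ℕ) : ZMod q)).val ≤ m then
        some ⟨(((J.val : ℕ) : ZMod q) -
          ((((((J.val : ℕ) : ZMod q) - ((K.val : ℕ) : ZMod q)).val - 1) * (g + 2) : ℕ) : ZMod q)).val,
          ZMod.val_lt _⟩
      else
        some ⟨(((K.val : ℕ) : ZMod q) -
          (((g - (((J.val : ℕ) : ZMod q) - ((K.val : ℕ) : ZMod q)).val) * (g + 2) : ℕ) : ZMod q)).val,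
          ZMod.val_lt _⟩ := by
    intro J K
    rw [hP J K]
    rw [natsub_mod_val q K.val J.val J.isLt.le, natsub_mod_val q J.val K.val K.isLt.le]
    simp only [subMod_val]
  -- star characterization
  have star : ∀ J K : Fin q, (P J K = none ↔ (((K.val : ℕ) : ZMod q) - ((J.val : ℕ) : ZMod q)).val < z) := by
    intro J K
    rw [hP' J K]
    split_ifs with h1 h2 <;> simp [h1]
  -- range of h
  have hh : ∀ J K : Fin q, ¬(((K.val : ℕ) : ZMod q) - ((J.val : ℕ) : ZMod q)).val < z →
      1 ≤ (((J.val : ℕ) : ZMod q) - ((K.val : ℕ) : ZMod q)).val ∧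
      (((J.val : ℕ) : ZMod q) - ((K.val : ℕ) : ZMod q)).val ≤ g := by
    intro J K hno
    have hx : ((J.val : ℕ) : ZMod q) - ((K.val : ℕ) : ZMod q)
        = -(((K.val : ℕ) : ZMod q) - ((J.val : ℕ) : ZMod q)) := by ring
    have hKJ : (((K.val : ℕ) : ZMod q) - ((J.val : ℕ) : ZMod q)) ≠ 0 := by
      intro h0; rw [h0, ZMod.val_zero] at hno; omega
    rw [hx, ZMod.neg_val, if_neg hKJ]
    have := ZMod.val_lt (((K.val : ℕ) : ZMod q) - ((J.val : ℕ) : ZMod q))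
    omega
  -- key characterization
  have key : ∀ J K s : Fin q, P J K = some s ↔ ∃ h : ℕ, 1 ≤ h ∧ h ≤ g ∧
      ((J.val : ℕ) : ZMod q) = ((s.val : ℕ) : ZMod q) + ((pdaE g m h : ℕ) : ZMod q) ∧
      ((K.val : ℕ) : ZMod q) = ((s.val : ℕ) : ZMod q) + ((pdaE g m h : ℕ) : ZMod q)
        - ((h : ℕ) : ZMod q) := by
    intro J K s
    constructor
    · intro hPJK
      rw [hP' J K] at hPJK
      split_ifs at hPJK with h1 h2
      · obtain ⟨hl, hu⟩ := hh J K h1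
        set h := (((J.val : ℕ) : ZMod q) - ((K.val : ℕ) : ZMod q)).val with hhdef
        have hE : pdaE g m h = (h - 1) * (g + 2) := by simp only [pdaE, if_pos h2]
        have hs : (((J.val : ℕ) : ZMod q) - (((h - 1) * (g + 2) : ℕ) : ZMod q)).val = s.val := by
          have := Option.some.inj hPJK
          exact congrArg Fin.val this
        have hs' : ((J.val : ℕ) : ZMod q) - (((h - 1) * (g + 2) : ℕ) : ZMod q)
            = ((s.val : ℕ) : ZMod q) := by
          rw [← hs, valcast]
        have hJ : ((J.val : ℕ) : ZMod q) = ((s.val : ℕ) : ZMod q) + ((pdaE g m h : ℕ) : ZMod q) := by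
          rw [hE, ← hs']; ring
        refine ⟨h, hl, hu, hJ, ?_⟩
        have hJK : ((J.val : ℕ) : ZMod q) - ((K.val : ℕ) : ZMod q) = ((h : ℕ) : ZMod q) := by
          rw [← valcast q (((J.val : ℕ) : ZMod q) - ((K.val : ℕ) : ZMod q))]
        rw [← hJ]
        rw [← hJK]; ring
      · obtain ⟨hl, hu⟩ := hh J K h1
        set h := (((J.val : ℕ) : ZMod q) - ((K.val : ℕ) : ZMod q)).val with hhdef
        have hE : pdaE g m h = (g - h) * (g + 2) + h := by simp only [pdaE, if_neg h2]
        have hs : (((K.val : ℕ) : ZMod q) - (((g - h) * (g + 2) : ℕ) : ZMod q)).val = s.val := by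
          have := Option.some.inj hPJK
          exact congrArg Fin.val this
        have hs' : ((K.val : ℕ) : ZMod q) - (((g - h) * (g + 2) : ℕ) : ZMod q)
            = ((s.val : ℕ) : ZMod q) := by
          rw [← hs, valcast]
        have hcastE : ((pdaE g m h : ℕ) : ZMod q)
            = (((g - h) * (g + 2) : ℕ) : ZMod q) + ((h : ℕ) : ZMod q) := by
          rw [hE]; push_cast; ring
        have hK : ((K.val : ℕ) : ZMod q) = ((s.val : ℕ) : ZMod q)
            + ((pdaE g m h : ℕ) : ZMod q) - ((h : ℕ) : ZMod q) := by
          rw [hcastE, ← hs']; ring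
        refine ⟨h, hl, hu, ?_, hK⟩
        have hJK : ((J.val : ℕ) : ZMod q) - ((K.val : ℕ) : ZMod q) = ((h : ℕ) : ZMod q) := by
          rw [← valcast q (((J.val : ℕ) : ZMod q) - ((K.val : ℕ) : ZMod q))]
        have : ((J.val : ℕ) : ZMod q) = ((K.val : ℕ) : ZMod q) + ((h : ℕ) : ZMod q) := by
          rw [← hJK]; ring
        rw [this, hK]; ring
    · rintro ⟨h, hl, hu, hJ, hK⟩
      rw [hP' J K]
      have hJK : ((J.val : ℕ) : ZMod q) - ((K.val : ℕ) : ZMod q) = ((h : ℕ) : ZMod q) := by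
        rw [hJ, hK]; ring
      have hvJK : (((J.val : ℕ) : ZMod q) - ((K.val : ℕ) : ZMod q)).val = h := by
        rw [hJK, ZMod.val_cast_of_lt (by omega)]
      have hKJ : ((K.val : ℕ) : ZMod q) - ((J.val : ℕ) : ZMod q) = -((h : ℕ) : ZMod q) := by
        rw [hJ, hK]; ring
      have hne0 : ((h : ℕ) : ZMod q) ≠ 0 := by
        intro h0
        have := ZMod.val_cast_of_lt (show h < q by omega)
        rw [h0, ZMod.val_zero] at this; omega
      have hstar : ¬(((K.val : ℕ) : ZMod q) - ((J.val : ℕ) : ZMod q)).val < z := by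
        rw [hKJ, ZMod.neg_val, if_neg hne0, ZMod.val_cast_of_lt (show h < q by omega)]
        omega
      rw [if_neg hstar]
      simp only [hvJK]
      by_cases hle : h ≤ m
      · rw [if_pos hle]
        congr 1
        apply Fin.ext
        simp only
        have hE : pdaE g m h = (h - 1) * (g + 2) := by simp only [pdaE, if_pos hle]
        rw [hJ, ← hE]
        have : ((s.val : ℕ) : ZMod q) + ((pdaE g m h : ℕ) : ZMod q)
            - ((pdaE g m h : ℕ) : ZMod q) = ((s.val : ℕ) : ZMod q) := by ring
        rw [this, ZMod.val_cast_of_lt s.isLt]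
      · rw [if_neg hle]
        congr 1
        apply Fin.ext
        simp only
        have hE : pdaE g m h = (g - h) * (g + 2) + h := by simp only [pdaE, if_neg hle]
        have hcastE : ((pdaE g m h : ℕ) : ZMod q)
            = (((g - h) * (g + 2) : ℕ) : ZMod q) + ((h : ℕ) : ZMod q) := by
          rw [hE]; push_cast; ring
        rw [hK, hcastE]
        have : ((s.val : ℕ) : ZMod q) + ((((g - h) * (g + 2) : ℕ) : ZMod q) + ((h : ℕ) : ZMod q))
            - ((h : ℕ) : ZMod q) - (((g - h) * (g + 2) : ℕ) : ZMod q)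
            = ((s.val : ℕ) : ZMod q) := by ring
        rw [this, ZMod.val_cast_of_lt s.isLt]
  -- column star count
  have c1 : ∀ K : Fin q, (Finset.univ.filter fun J : Fin q => P J K = none).card = z := by
    intro K
    rw [show z = (Finset.range z).card from (Finset.card_range z).symm]
    apply Finset.card_nbij' (i := fun J : Fin q => (((K.val : ℕ) : ZMod q) - ((J.val : ℕ) : ZMod q)).val)
      (j := fun d : ℕ => ⟨(((K.val : ℕ) : ZMod q) - ((d : ℕ) : ZMod q)).val, ZMod.val_lt _⟩)
    · intro J hJ
      simp only [Finset.mem_coe, Finset.mem_filter, Finset.mem_univ, true_and] at hJ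
      rw [Finset.mem_coe, Finset.mem_range]
      exact (star J K).1 hJ
    · intro d hd
      rw [Finset.mem_coe, Finset.mem_range] at hd
      simp only [Finset.mem_coe, Finset.mem_filter, Finset.mem_univ, true_and]
      rw [star]
      simp only
      rw [valcast]
      have : ((K.val : ℕ) : ZMod q) - (((K.val : ℕ) : ZMod q) - ((d : ℕ) : ZMod q))
          = ((d : ℕ) : ZMod q) := by ring
      rw [this, ZMod.val_cast_of_lt (by omega)]
      exact hd
    · intro J _
      apply Fin.ext
      simp only
      rw [valcast]
      have : ((K.val : ℕ) : ZMod q) - (((K.val : ℕ) : ZMod q) - ((J.val : ℕ) : ZMod q))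
          = ((J.val : ℕ) : ZMod q) := by ring
      rw [this, ZMod.val_cast_of_lt J.isLt]
    · intro d hd
      rw [Finset.mem_coe, Finset.mem_range] at hd
      simp only
      rw [valcast]
      have : ((K.val : ℕ) : ZMod q) - (((K.val : ℕ) : ZMod q) - ((d : ℕ) : ZMod q))
          = ((d : ℕ) : ZMod q) := by ring
      rw [this, ZMod.val_cast_of_lt (by omega)]
  -- regularity
  have reg : PDARegular q q q g P := by
    intro s
    rw [show g = (Finset.Icc 1 g).card by rw [Nat.card_Icc]; omega]
    apply Finset.card_nbij'
      (i := fun jk : Fin q × Fin q => (((jk.1.val : ℕ) : ZMod q) - ((jk.2.val : ℕ) : ZMod q)).val)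
      (j := fun h : ℕ =>
        (⟨(((s.val : ℕ) : ZMod q) + ((pdaE g m h : ℕ) : ZMod q)).val, ZMod.val_lt _⟩,
         ⟨(((s.val : ℕ) : ZMod q) + ((pdaE g m h : ℕ) : ZMod q) - ((h : ℕ) : ZMod q)).val,
           ZMod.val_lt _⟩))
    · intro jk hjk
      simp only [Finset.mem_coe, Finset.mem_filter, Finset.mem_univ, true_and] at hjk
      obtain ⟨h, hl, hu, hJ, hK⟩ := (key jk.1 jk.2 s).1 hjk
      have : ((jk.1.val : ℕ) : ZMod q) - ((jk.2.val : ℕ) : ZMod q) = ((h : ℕ) : ZMod q) := by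
        rw [hJ, hK]; ring
      rw [Finset.mem_coe, Finset.mem_Icc]
      beta_reduce
      rw [this, ZMod.val_cast_of_lt (by omega)]
      exact ⟨hl, hu⟩
    · intro h hmem
      rw [Finset.mem_coe, Finset.mem_Icc] at hmem
      simp only [Finset.mem_coe, Finset.mem_filter, Finset.mem_univ, true_and]
      apply (key _ _ s).2
      exact ⟨h, hmem.1, hmem.2, by simp only [valcast], by simp only [valcast]⟩
    · intro jk hjk
      simp only [Finset.mem_coe, Finset.mem_filter, Finset.mem_univ, true_and] at hjk
      obtain ⟨h, hl, hu, hJ, hK⟩ := (key jk.1 jk.2 s).1 hjk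
      have hi : (((jk.1.val : ℕ) : ZMod q) - ((jk.2.val : ℕ) : ZMod q)).val = h := by
        have : ((jk.1.val : ℕ) : ZMod q) - ((jk.2.val : ℕ) : ZMod q) = ((h : ℕ) : ZMod q) := by
          rw [hJ, hK]; ring
        rw [this, ZMod.val_cast_of_lt (by omega)]
      simp only [hi]
      ext
      · simp only
        rw [← hJ, ZMod.val_cast_of_lt jk.1.isLt]
      · simp only
        rw [← hK, ZMod.val_cast_of_lt jk.2.isLt]
    · intro h hmem
      rw [Finset.mem_coe, Finset.mem_Icc] at hmem
      simp only [valcast]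
      have : ((s.val : ℕ) : ZMod q) + ((pdaE g m h : ℕ) : ZMod q) -
          (((s.val : ℕ) : ZMod q) + ((pdaE g m h : ℕ) : ZMod q) - ((h : ℕ) : ZMod q))
          = ((h : ℕ) : ZMod q) := by ring
      rw [this, ZMod.val_cast_of_lt (by omega)]
  refine ⟨⟨c1, ?_, ?_⟩, reg⟩
  · -- every symbol occurs
    intro s
    have hcard := reg s
    have hpos : 0 < (Finset.univ.filter fun jk : Fin q × Fin q => P jk.1 jk.2 = some s).card := by
      omega
    obtain ⟨⟨j, k⟩, hmem⟩ := Finset.card_pos.mp hpos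
    simp only [Finset.mem_filter, Finset.mem_univ, true_and] at hmem
    exact ⟨j, k, hmem⟩
  · -- condition C3
    intro j1 j2 k1 k2 s hp1 hp2 hnepair
    obtain ⟨h1, l1, u1, hJ1, hK1⟩ := (key j1 k1 s).1 hp1
    obtain ⟨h2, l2, u2, hJ2, hK2⟩ := (key j2 k2 s).1 hp2
    have hne12 : h1 ≠ h2 := by
      rintro rfl
      apply hnepair
      have e1 : j1 = j2 := Fin.ext (castinj _ _ j1.isLt j2.isLt (hJ1.trans hJ2.symm))
      have e2 : k1 = k2 := Fin.ext (castinj _ _ k1.isLt k2.isLt (hK1.trans hK2.symm))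
      rw [e1, e2]
    constructor
    · rw [star]
      have : ((k2.val : ℕ) : ZMod q) - ((j1.val : ℕ) : ZMod q)
          = ((pdaE g m h2 : ℕ) : ZMod q) - ((h2 : ℕ) : ZMod q) - ((pdaE g m h1 : ℕ) : ZMod q) := by
        rw [hK2, hJ1]; ring
      rw [this]
      exact pda_core g m z q hg hm1 hm2 hz1 hz2 hzq h1 h2 l1 u1 l2 u2 hne12
    · rw [star]
      have : ((k1.val : ℕ) : ZMod q) - ((j2.val : ℕ) : ZMod q)
          = ((pdaE g m h1 : ℕ) : ZMod q) - ((h1 : ℕ) : ZMod q) - ((pdaE g m h2 : ℕ) : ZMod q) := by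
        rw [hK1, hJ2]; ring
      rw [this]
      exact pda_core g m z q hg hm1 hm2 hz1 hz2 hzq h2 h1 l2 u2 l1 u1 (Ne.symm hne12)
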